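/- Let z₋, z₊ ∈ ℝ with 0 < z₋ < z₊. Then ∫₀^{z₋} dz / (√z · √((z₊−z)(z₋−z))) = (π/√z₊) · F(1/2, 1/2; 1; z₋/z₊). -/

import Mathlib

open MeasureTheory Real Set

/-- The Pochhammer symbol `(q)_k = q(q+1)⋯(q+k−1)`. -/
noncomputable def poch (q : ℝ) (k : ℕ) : ℝ := ∏ i ∈ Finset.range k, (q + (i : ℝ))

/-- The Gauss hypergeometric series `F(a,b;c;x) = Σ_n (a)_n (b)_n / ((c)_n n!) xⁿ`. -/
noncomputable def gaussF (a b c x : ℝ) : ℝ :=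
  ∑' n : ℕ, poch a n * poch b n / (poch c n * (n.factorial : ℝ)) * x ^ n

noncomputable def cc (n : ℕ) : ℝ := ∏ i ∈ Finset.range n, ((2 * (i:ℝ) + 1) / (2 * i + 2))

lemma cc_zero : cc 0 = 1 := by simp [cc]

lemma cc_succ (n : ℕ) : cc (n + 1) = cc n * ((2 * n + 1) / (2 * n + 2)) := by
  simp [cc, Finset.prod_range_succ, mul_div_mul_comm]

lemma cc_pos (n : ℕ) : 0 < cc n := by
  apply Finset.prod_pos; intro i _; positivity

lemma cc_le_one (n : ℕ) : cc n ≤ 1 := by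
  apply Finset.prod_le_one
  · intro i _; positivity
  · intro i _
    rw [div_le_one (by positivity)]; linarith

lemma cc_rec (n : ℕ) : (2 * (n:ℝ) + 2) * cc (n + 1) = (2 * n + 1) * cc n := by
  rw [cc_succ]; field_simp

lemma poch_half (n : ℕ) : poch (1/2) n = cc n * n.factorial := by
  induction n with
  | zero => simp [poch, cc]
  | succ n ih =>
    rw [poch, Finset.prod_range_succ, ← poch, ih, cc_succ, Nat.factorial_succ]
    push_cast
    field_simp
    ring

lemma poch_one (n : ℕ) : poch 1 n = n.factorial := by
  induction n with
  | zero => simp [poch]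
  | succ n ih =>
    rw [poch, Finset.prod_range_succ, ← poch, ih, Nat.factorial_succ]
    push_cast; ring

lemma abs_cc_le_one (n : ℕ) : |cc n| ≤ 1 := by
  rw [abs_of_pos (cc_pos n)]; exact cc_le_one n

lemma summable_aux {u : ℝ} (hu : |u| < 1) (a b : ℝ) :
    Summable (fun n : ℕ => (a * n + b) * cc n * u ^ n) := by
  have hr : ‖|u|‖ < 1 := by rwa [Real.norm_eq_abs, abs_abs]
  have h1 : Summable (fun n : ℕ => |a| * ((n:ℝ) ^ 1 * |u| ^ n) + |b| * |u| ^ n) :=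
    ((summable_pow_mul_geometric_of_norm_lt_one 1 hr).mul_left _).add
      ((summable_geometric_of_lt_one (abs_nonneg u) hu).mul_left _)
  apply Summable.of_norm_bounded h1
  intro n
  rw [Real.norm_eq_abs, abs_mul, abs_mul, abs_pow]
  have hab : |a * n + b| ≤ |a| * n + |b| :=
    (abs_add_le _ _).trans (by rw [abs_mul, Nat.abs_cast])
  calc |a * ↑n + b| * |cc n| * |u| ^ n ≤ (|a| * n + |b|) * 1 * |u| ^ n := by
        gcongr <;> first | exact hab | exact abs_cc_le_one n
    _ = |a| * ((n:ℝ) ^ 1 * |u| ^ n) + |b| * |u| ^ n := by ring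

lemma summable_cc {u : ℝ} (hu : |u| < 1) : Summable (fun n : ℕ => cc n * u ^ n) := by
  simpa using summable_aux hu 0 1

lemma summable_deriv_aux {r : ℝ} (h0 : 0 ≤ r) (hr : r < 1) :
    Summable (fun n : ℕ => (n : ℝ) * r ^ (n - 1)) := by
  rw [← summable_nat_add_iff 1]
  have hr' : ‖r‖ < 1 := by rwa [Real.norm_eq_abs, abs_of_nonneg h0]
  have : Summable (fun n : ℕ => (n : ℝ) ^ 1 * r ^ n + r ^ n) :=
    (summable_pow_mul_geometric_of_norm_lt_one 1 hr').add
      (summable_geometric_of_lt_one h0 hr)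
  apply this.congr
  intro n
  push_cast
  simp only [Nat.add_sub_cancel, pow_one]
  ring

lemma summable_ccderiv {u : ℝ} (hu : |u| < 1) :
    Summable (fun n : ℕ => cc n * ((n : ℝ) * u ^ (n - 1))) := by
  apply Summable.of_norm_bounded (summable_deriv_aux (abs_nonneg u) hu)
  intro n
  rw [Real.norm_eq_abs, abs_mul, abs_mul, abs_pow, Nat.abs_cast]
  calc |cc n| * ((n:ℝ) * |u| ^ (n-1)) ≤ 1 * ((n:ℝ) * |u| ^ (n-1)) := by
        gcongr; exact abs_cc_le_one n
    _ = (n:ℝ) * |u| ^ (n-1) := by ring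

lemma hasDerivAt_g {u : ℝ} (hu : |u| < 1) :
    HasDerivAt (fun y => ∑' n : ℕ, cc n * y ^ n)
      (∑' n : ℕ, cc n * ((n : ℝ) * u ^ (n - 1))) u := by
  set r : ℝ := (|u| + 1) / 2 with hrdef
  have hr0 : 0 < r := by positivity
  have hur : |u| < r := by rw [hrdef]; linarith
  have hr1 : r < 1 := by rw [hrdef]; linarith
  apply hasDerivAt_tsum_of_isPreconnected
    (summable_deriv_aux hr0.le hr1) (isOpen_Ioo (a := -r) (b := r))
    (convex_Ioo _ _).isPreconnected
    (fun n y _ => (hasDerivAt_pow n y).const_mul (cc n))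
    ?_ (by constructor <;> [linarith [abs_nonneg u]; exact hr0] : (0:ℝ) ∈ Set.Ioo (-r) r)
    (by simpa using summable_cc (u := 0) (by simp))
    (by constructor <;> [linarith [neg_abs_le u]; linarith [le_abs_self u]])
  intro n y hy
  have hyr : |y| ≤ r := by
    rw [abs_le]; exact ⟨hy.1.le, hy.2.le⟩
  rw [Real.norm_eq_abs, abs_mul, abs_mul, abs_pow, Nat.abs_cast]
  calc |cc n| * ((n:ℝ) * |y| ^ (n-1)) ≤ 1 * ((n:ℝ) * r ^ (n-1)) := by
        gcongr <;> first | exact abs_cc_le_one n | exact abs_nonneg y | exact hyr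
    _ = (n:ℝ) * r ^ (n-1) := by ring

lemma deriv_identity {u : ℝ} (hu : |u| < 1) :
    2 * (1 - u) * (∑' n : ℕ, cc n * ((n : ℝ) * u ^ (n - 1)))
      = ∑' n : ℕ, cc n * u ^ n := by
  have hD := summable_ccderiv hu
  -- D = E where E = ∑ (n+1) cc(n+1) u^n
  have hE : Summable (fun n : ℕ => ((n:ℝ) + 1) * cc (n + 1) * u ^ n) := by
    have := (summable_nat_add_iff 1).2 hD
    apply this.congr
    intro n
    simp only [Nat.add_sub_cancel]
    push_cast
    ring
  have hDE : (∑' n : ℕ, cc n * ((n : ℝ) * u ^ (n - 1)))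
      = ∑' n : ℕ, ((n:ℝ) + 1) * cc (n + 1) * u ^ n := by
    rw [Summable.tsum_eq_zero_add hD]
    simp only [Nat.cast_zero, zero_mul, mul_zero, zero_add]
    apply tsum_congr
    intro n
    simp only [Nat.add_sub_cancel]
    push_cast
    ring
  -- claim1 : 2E = ∑ (2n+1) cc n u^n
  have claim1 : 2 * (∑' n : ℕ, ((n:ℝ) + 1) * cc (n + 1) * u ^ n)
      = ∑' n : ℕ, (2 * (n:ℝ) + 1) * cc n * u ^ n := by
    rw [← tsum_mul_left]
    apply tsum_congr
    intro n
    linear_combination u ^ n * cc_rec n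
  have hS1 : Summable (fun n : ℕ => (2 * (n:ℝ) + 1) * cc n * u ^ n) := summable_aux hu 2 1
  have hS2 : Summable (fun n : ℕ => 2 * (n:ℝ) * cc n * u ^ n) := by
    have := summable_aux hu 2 0
    apply this.congr; intro n; ring
  have hA : Summable (fun n : ℕ => cc n * u ^ n) := summable_cc hu
  have split : (∑' n : ℕ, (2 * (n:ℝ) + 1) * cc n * u ^ n)
      = (∑' n : ℕ, 2 * (n:ℝ) * cc n * u ^ n) + ∑' n : ℕ, cc n * u ^ n := by
    rw [← Summable.tsum_add hS2 hA]
    exact tsum_congr fun n => by ring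
  have claim2 : (∑' n : ℕ, 2 * (n:ℝ) * cc n * u ^ n)
      = u * ∑' n : ℕ, (2 * (n:ℝ) + 1) * cc n * u ^ n := by
    rw [Summable.tsum_eq_zero_add hS2, ← tsum_mul_left]
    simp only [Nat.cast_zero, mul_zero, zero_mul, pow_zero, mul_one, zero_add]
    exact tsum_congr fun n => by push_cast; linear_combination u ^ (n+1) * cc_rec n
  rw [hDE]
  linear_combination (1 - u) * claim1 + split + claim2

lemma tsum_cc_zero : (∑' n : ℕ, cc n * (0:ℝ) ^ n) = 1 := by
  rw [tsum_eq_single 0]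
  · simp [cc]
  · intro n hn
    simp [zero_pow hn]

lemma binom {u : ℝ} (h0 : 0 ≤ u) (h1 : u < 1) :
    (∑' n : ℕ, cc n * u ^ n) = (Real.sqrt (1 - u))⁻¹ := by
  rcases eq_or_lt_of_le h0 with h | h
  · rw [← h]; simpa using tsum_cc_zero
  · set φ : ℝ → ℝ := fun y => (∑' n : ℕ, cc n * y ^ n) * Real.sqrt (1 - y) with hφ
    have key : ∀ y ∈ Set.Ico (0:ℝ) u, HasDerivWithinAt φ 0 (Set.Ici y) y := by
      intro y hy
      have hy1 : |y| < 1 := by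
        rw [abs_of_nonneg hy.1]; linarith [hy.2]
      have hs : (0:ℝ) < 1 - y := by
        rcases abs_lt.1 hy1 with ⟨_, h2⟩; linarith
      have hsq : Real.sqrt (1 - y) ^ 2 = 1 - y := Real.sq_sqrt hs.le
      have hspos : 0 < Real.sqrt (1 - y) := Real.sqrt_pos.2 hs
      have hd1 := hasDerivAt_g hy1
      have hd2 : HasDerivAt (fun z : ℝ => Real.sqrt (1 - z))
          (-(1 / (2 * Real.sqrt (1 - y)))) y := by
        have hb : HasDerivAt (fun z : ℝ => 1 - z) (-1) y := by
          simpa using (hasDerivAt_id y).const_sub 1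
        have : HasDerivAt (fun z : ℝ => Real.sqrt (1 - z)) (1 / (2 * Real.sqrt (1 - y)) * -1) y := (Real.hasDerivAt_sqrt hs.ne').comp y hb
        convert this using 1
        ring
      have hprod := hd1.mul hd2
      have hzero : (∑' n : ℕ, cc n * ((n:ℝ) * y ^ (n - 1))) * Real.sqrt (1 - y)
          + (∑' n : ℕ, cc n * y ^ n) * -(1 / (2 * Real.sqrt (1 - y))) = 0 := by
        have hid := deriv_identity hy1
        generalize (∑' n : ℕ, cc n * ((n:ℝ) * y ^ (n - 1))) = D at hid ⊢
        field_simp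
        linear_combination 2 * D * hsq + hid
      rw [← hzero]
      exact hprod.hasDerivWithinAt
    have hcont : ContinuousOn φ (Set.Icc 0 u) := by
      intro y hy
      have hy1 : |y| < 1 := by
        rw [abs_of_nonneg hy.1]; linarith [hy.2, h1]
      have hs : (0:ℝ) < 1 - y := by linarith [(abs_lt.1 hy1).2]
      have hd1 := hasDerivAt_g hy1
      have hd2 : HasDerivAt (fun z : ℝ => Real.sqrt (1 - z))
          (-(1 / (2 * Real.sqrt (1 - y)))) y := by
        have hb : HasDerivAt (fun z : ℝ => 1 - z) (-1) y := by
          simpa using (hasDerivAt_id y).const_sub 1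
        have : HasDerivAt (fun z : ℝ => Real.sqrt (1 - z)) (1 / (2 * Real.sqrt (1 - y)) * -1) y := (Real.hasDerivAt_sqrt hs.ne').comp y hb
        convert this using 1
        ring
      exact ((hd1.mul hd2).continuousAt).continuousWithinAt
    have := constant_of_has_deriv_right_zero hcont key u (Set.right_mem_Icc.2 h0)
    have hφ0 : φ 0 = 1 := by
      rw [hφ]; simp [tsum_cc_zero]
    have hφu : φ u = 1 := by rw [this, hφ0]
    have hs : (0:ℝ) < 1 - u := by linarith
    have hspos : 0 < Real.sqrt (1 - u) := Real.sqrt_pos.2 hs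
    rw [hφ] at hφu
    simp only at hφu
    field_simp
    linarith [hφu]

lemma integral_sin_even_half (n : ℕ) :
    ∫ θ in (0:ℝ)..(π/2), Real.sin θ ^ (2*n) = π/2 * cc n := by
  have hint : ∀ a b : ℝ, IntervalIntegrable (fun θ => Real.sin θ ^ (2*n)) volume a b :=
    fun a b => (Real.continuous_sin.pow _).intervalIntegrable a b
  have h2 : (∫ θ in (π/2:ℝ)..π, Real.sin θ ^ (2*n))
      = ∫ θ in (0:ℝ)..(π/2), Real.sin θ ^ (2*n) := by
    have := intervalIntegral.integral_comp_sub_left (a := 0) (b := π/2)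
      (fun θ => Real.sin θ ^ (2*n)) π
    simp only [Real.sin_pi_sub, sub_zero] at this
    rw [show π - π/2 = π/2 by ring] at this
    exact this.symm
  have h3 := intervalIntegral.integral_add_adjacent_intervals
    (a := (0:ℝ)) (b := π/2) (c := π) (hint 0 (π/2)) (hint (π/2) π)
  have h1 : (∫ θ in (0:ℝ)..π, Real.sin θ ^ (2*n)) = π * cc n := by
    rw [cc]; exact integral_sin_pow_even n
  rw [h2] at h3
  linarith [h3, h1]

lemma integral_sin_even_Ioo (n : ℕ) :
    ∫ θ in Set.Ioo (0:ℝ) (π/2), Real.sin θ ^ (2*n) = π/2 * cc n := by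
  rw [← MeasureTheory.integral_Ioc_eq_integral_Ioo,
    ← intervalIntegral.integral_of_le (by positivity)]
  exact integral_sin_even_half n

lemma swap_lemma {x : ℝ} (hx0 : 0 ≤ x) (hx1 : x < 1) :
    ∫ θ in Set.Ioo (0:ℝ) (π/2), (Real.sqrt (1 - x * Real.sin θ ^ 2))⁻¹
      = ∑' n : ℕ, cc n ^ 2 * x ^ n * (π/2) := by
  have hpt : ∀ θ : ℝ, (Real.sqrt (1 - x * Real.sin θ ^ 2))⁻¹
      = ∑' n : ℕ, cc n * x ^ n * Real.sin θ ^ (2*n) := by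
    intro θ
    have hu0 : 0 ≤ x * Real.sin θ ^ 2 := mul_nonneg hx0 (sq_nonneg _)
    have hu1 : x * Real.sin θ ^ 2 < 1 := by
      have : x * Real.sin θ ^ 2 ≤ x * 1 := by
        apply mul_le_mul_of_nonneg_left _ hx0
        rw [sq_le_one_iff_abs_le_one]
        exact Real.abs_sin_le_one θ
      linarith
    rw [← binom hu0 hu1]
    exact tsum_congr fun n => by rw [mul_pow, pow_mul]; ring
  simp_rw [hpt]
  have hInt : ∀ n : ℕ, Integrable (fun θ => cc n * x ^ n * Real.sin θ ^ (2*n))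
      (volume.restrict (Set.Ioo (0:ℝ) (π/2))) := by
    intro n
    have hc : Continuous fun θ => cc n * x ^ n * Real.sin θ ^ (2*n) :=
      continuous_const.mul (Real.continuous_sin.pow _)
    exact (hc.integrableOn_Icc (a := 0) (b := π/2)).mono_set Set.Ioo_subset_Icc_self
  have hsum : Summable fun n : ℕ =>
      ∫ θ in Set.Ioo (0:ℝ) (π/2), ‖cc n * x ^ n * Real.sin θ ^ (2*n)‖ := by
    have hb : ∀ n : ℕ, (∫ θ in Set.Ioo (0:ℝ) (π/2), ‖cc n * x ^ n * Real.sin θ ^ (2*n)‖)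
        = cc n ^ 2 * x ^ n * (π/2) := by
      intro n
      have : ∀ θ : ℝ, ‖cc n * x ^ n * Real.sin θ ^ (2*n)‖
          = cc n * x ^ n * Real.sin θ ^ (2*n) := by
        intro θ
        rw [Real.norm_eq_abs, abs_of_nonneg]
        have := cc_pos n
        have : 0 ≤ Real.sin θ ^ (2*n) := by rw [pow_mul]; positivity
        positivity
      simp_rw [this]
      rw [MeasureTheory.integral_const_mul, integral_sin_even_Ioo]
      ring
    simp_rw [hb]
    apply Summable.of_nonneg_of_le (fun n => by positivity)
      (fun n => ?_) ((summable_geometric_of_lt_one hx0 hx1).mul_right (π/2))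
    have h1 : cc n ^ 2 ≤ 1 := by
      have := cc_pos n
      have := cc_le_one n
      nlinarith
    have : cc n ^ 2 * x ^ n ≤ 1 * x ^ n := by
      apply mul_le_mul_of_nonneg_right h1 (by positivity)
    nlinarith [pi_pos]
  rw [← MeasureTheory.integral_tsum_of_summable_integral_norm hInt hsum]
  apply tsum_congr
  intro n
  rw [MeasureTheory.integral_const_mul, integral_sin_even_Ioo]
  ring

lemma image_sin_sq (zm : ℝ) (h0 : 0 < zm) :
    (fun θ => zm * Real.sin θ ^ 2) '' Ioo 0 (π/2) = Ioo 0 zm := by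
  ext y
  constructor
  · rintro ⟨θ, hθ, rfl⟩
    have hπ := Real.pi_pos
    have hs0 : 0 < Real.sin θ := Real.sin_pos_of_pos_of_lt_pi hθ.1 (by linarith [hθ.2])
    have hs1 : Real.sin θ < 1 := by
      have := Real.strictMonoOn_sin (by constructor <;> linarith [hθ.1, hθ.2] : θ ∈ Icc (-(π/2)) (π/2))
        (by constructor <;> linarith : (π/2) ∈ Icc (-(π/2)) (π/2)) hθ.2
      simpa using this
    refine ⟨by positivity, ?_⟩
    show zm * Real.sin θ ^ 2 < zm
    nlinarith [mul_lt_mul_of_pos_left hs1 hs0, mul_pos hs0 hs0]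
  · rintro ⟨hy0, hy1⟩
    have hq0 : 0 < y / zm := by positivity
    have hq1 : y / zm < 1 := (div_lt_one h0).2 hy1
    set t := Real.sqrt (y / zm) with ht
    have ht0 : 0 < t := Real.sqrt_pos.2 hq0
    have ht1 : t < 1 := by
      rw [ht, show (1:ℝ) = Real.sqrt 1 by simp]
      exact Real.sqrt_lt_sqrt hq0.le hq1
    refine ⟨Real.arcsin t, ⟨Real.arcsin_pos.2 ht0, Real.arcsin_lt_pi_div_two.2 ht1⟩, ?_⟩
    show zm * Real.sin (Real.arcsin t) ^ 2 = y
    rw [Real.sin_arcsin (by linarith) ht1.le, ht, Real.sq_sqrt hq0.le]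
    field_simp

lemma injOn_sin_sq (zm : ℝ) (h0 : 0 < zm) :
    InjOn (fun θ => zm * Real.sin θ ^ 2) (Ioo 0 (π/2)) := by
  intro a ha b hb hab
  have hπ := Real.pi_pos
  simp only at hab
  have h1 : Real.sin a ^ 2 = Real.sin b ^ 2 := mul_left_cancel₀ h0.ne' hab
  have hsa : 0 ≤ Real.sin a := Real.sin_nonneg_of_nonneg_of_le_pi ha.1.le (by linarith [ha.2])
  have hsb : 0 ≤ Real.sin b := Real.sin_nonneg_of_nonneg_of_le_pi hb.1.le (by linarith [hb.2])
  have h2 : Real.sin a = Real.sin b := by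
    nlinarith
  exact Real.injOn_sin ⟨by linarith [ha.1], by linarith [ha.2]⟩
    ⟨by linarith [hb.1], by linarith [hb.2]⟩ h2

lemma cov (zm zp : ℝ) (h0 : 0 < zm) (h1 : zm < zp) :
    (∫ z in (0 : ℝ)..zm, 1 / (Real.sqrt z * Real.sqrt ((zp - z) * (zm - z))))
      = ∫ θ in Ioo (0:ℝ) (π/2),
          2 * (Real.sqrt zp * Real.sqrt (1 - (zm/zp) * Real.sin θ ^ 2))⁻¹ := by
  have hzp : 0 < zp := h0.trans h1
  rw [intervalIntegral.integral_of_le h0.le, MeasureTheory.integral_Ioc_eq_integral_Ioo,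
    ← image_sin_sq zm h0]
  rw [integral_image_eq_integral_abs_deriv_smul measurableSet_Ioo
    (fun θ _ => (show HasDerivAt (fun θ => zm * Real.sin θ ^ 2) _ θ from (((Real.hasDerivAt_sin θ).pow 2).const_mul zm)).hasDerivWithinAt)
    (injOn_sin_sq zm h0)]
  apply MeasureTheory.setIntegral_congr_fun measurableSet_Ioo
  intro θ hθ
  have hπ := Real.pi_pos
  have hs0 : 0 < Real.sin θ := Real.sin_pos_of_pos_of_lt_pi hθ.1 (by linarith [hθ.2])
  have hc0 : 0 < Real.cos θ := Real.cos_pos_of_mem_Ioo ⟨by linarith [hθ.1], hθ.2⟩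
  have hpyth := Real.sin_sq_add_cos_sq θ
  have hs1 : Real.sin θ ^ 2 ≤ 1 := by nlinarith
  have hfrac : 0 < 1 - zm/zp * Real.sin θ ^ 2 := by
    have : zm/zp < 1 := (div_lt_one hzp).2 h1
    nlinarith [div_pos h0 hzp]
  simp only [smul_eq_mul]
  -- rewrite the square roots
  have e1 : Real.sqrt (zm * Real.sin θ ^ 2) = Real.sqrt zm * Real.sin θ := by
    rw [Real.sqrt_mul h0.le, Real.sqrt_sq hs0.le]
  have e2 : zm - zm * Real.sin θ ^ 2 = zm * Real.cos θ ^ 2 := by nlinarith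
  have e3 : zp - zm * Real.sin θ ^ 2 = zp * (1 - zm/zp * Real.sin θ ^ 2) := by
    field_simp
  have e4 : Real.sqrt ((zp - zm * Real.sin θ ^ 2) * (zm - zm * Real.sin θ ^ 2))
      = Real.sqrt zp * Real.sqrt (1 - zm/zp * Real.sin θ ^ 2)
        * (Real.sqrt zm * Real.cos θ) := by
    rw [e2, e3, Real.sqrt_mul (by positivity), Real.sqrt_mul hzp.le,
      Real.sqrt_mul h0.le, Real.sqrt_sq hc0.le]
  have e5 : |zm * ((2:ℕ) * Real.sin θ ^ (2 - 1) * Real.cos θ)|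
      = zm * (2 * Real.sin θ * Real.cos θ) := by
    have hpos : 0 < zm * (2 * Real.sin θ * Real.cos θ) :=
      mul_pos h0 (by nlinarith [mul_pos hs0 hc0])
    rw [show |zm * ((2:ℕ) * Real.sin θ ^ (2 - 1) * Real.cos θ)|
        = |zm * (2 * Real.sin θ * Real.cos θ)| by norm_num]
    exact abs_of_pos hpos
  rw [e5, e1, e4]
  have hm : Real.sqrt zm * Real.sqrt zm = zm := Real.mul_self_sqrt h0.le
  have hsm : 0 < Real.sqrt zm := Real.sqrt_pos.2 h0
  have hsp : 0 < Real.sqrt zp := Real.sqrt_pos.2 hzp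
  have hsf : 0 < Real.sqrt (1 - zm/zp * Real.sin θ ^ 2) := Real.sqrt_pos.2 hfrac
  have key : Real.sqrt zm * Real.sin θ
        * (Real.sqrt zp * Real.sqrt (1 - zm/zp * Real.sin θ ^ 2) * (Real.sqrt zm * Real.cos θ))
      = zm * Real.sin θ * Real.cos θ
        * (Real.sqrt zp * Real.sqrt (1 - zm/zp * Real.sin θ ^ 2)) := by
    linear_combination Real.sin θ * Real.cos θ * Real.sqrt zp
      * Real.sqrt (1 - zm/zp * Real.sin θ ^ 2) * hm
  rw [one_div, key, mul_inv]
  rw [show zm * (2 * Real.sin θ * Real.cos θ)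
      * ((zm * Real.sin θ * Real.cos θ)⁻¹
        * (Real.sqrt zp * Real.sqrt (1 - zm/zp * Real.sin θ ^ 2))⁻¹)
    = (zm * Real.sin θ * Real.cos θ) * (zm * Real.sin θ * Real.cos θ)⁻¹
      * (2 * (Real.sqrt zp * Real.sqrt (1 - zm/zp * Real.sin θ ^ 2))⁻¹) by ring]
  rw [mul_inv_cancel₀ (by positivity), one_mul]


theorem stmt_9 (zm zp : ℝ) (h0 : 0 < zm) (h1 : zm < zp) :
    ∫ z in (0 : ℝ)..zm, 1 / (Real.sqrt z * Real.sqrt ((zp - z) * (zm - z)))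
      = Real.pi / Real.sqrt zp * gaussF (1 / 2) (1 / 2) 1 (zm / zp) := by
  have hzp : 0 < zp := h0.trans h1
  have hx0 : 0 < zm / zp := div_pos h0 hzp
  have hx1 : zm / zp < 1 := (div_lt_one hzp).2 h1
  rw [cov zm zp h0 h1]
  have hpt : ∀ θ : ℝ, 2 * (Real.sqrt zp * Real.sqrt (1 - zm/zp * Real.sin θ ^ 2))⁻¹
      = (2 / Real.sqrt zp) * (Real.sqrt (1 - zm/zp * Real.sin θ ^ 2))⁻¹ := by
    intro θ
    rw [mul_inv]
    ring
  simp_rw [hpt]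
  rw [MeasureTheory.integral_const_mul, swap_lemma hx0.le hx1]
  have hg : gaussF (1/2) (1/2) 1 (zm/zp) = ∑' n : ℕ, cc n ^ 2 * (zm/zp) ^ n := by
    rw [gaussF]
    apply tsum_congr
    intro n
    rw [poch_half, poch_one]
    have hn : (n.factorial : ℝ) ≠ 0 := Nat.cast_ne_zero.2 n.factorial_ne_zero
    field_simp
  rw [hg, tsum_mul_right]
  ring
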